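/- Let N ≥ 2, let ℏ, z ∈ ℂ with ℏ ≠ 0 and z ≠ 0, and let q_1,…,q_N ∈ ℂ be pairwise distinct. Then the dynamical rational GL_N R-matrix satisfies the skew-symmetry property R^{dyn}(ℏ,z|q) = −P_{12}·R^{dyn}(−ℏ,−z|q)·P_{12} and the unitarity property R^{dyn}(ℏ,z|q) · ( P_{12}·R^{dyn}(ℏ,−z|q)·P_{12} ) = (1/ℏ² − 1/z²)·(1_N ⊗ 1_N). -/

import Mathlib

open Matrix Finset
open scoped Kronecker

noncomputable section

/-- The matrix unit `E_{ij}`. -/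
def Eu (N : ℕ) (i j : Fin N) : Matrix (Fin N) (Fin N) ℂ := Matrix.single i j 1

/-- The permutation operator `P_{12} = Σ_{i,j} E_{ij} ⊗ E_{ji}`. -/
def Pmat (N : ℕ) : Matrix (Fin N × Fin N) (Fin N × Fin N) ℂ :=
  ∑ i, ∑ j, Eu N i j ⊗ₖ Eu N j i

/-- The dynamical rational GL_N R-matrix `R^{dyn}(ℏ,z|q)`. -/
def Rdyn (N : ℕ) (hb z : ℂ) (q : Fin N → ℂ) : Matrix (Fin N × Fin N) (Fin N × Fin N) ℂ :=
  (∑ i, ∑ j ∈ Finset.univ.erase i, (1/z + (N : ℂ)/(q j - q i)) • (Eu N i j ⊗ₖ Eu N j i))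
  + (∑ i, ∑ j ∈ Finset.univ.erase i, (1/hb + (N : ℂ)/(q i - q j)) • (Eu N i i ⊗ₖ Eu N j j))
  + (1/z + 1/hb) • ∑ i, Eu N i i ⊗ₖ Eu N i i

lemma Rdyn_apply (N : ℕ) (hb z : ℂ) (q : Fin N → ℂ) (a b c d : Fin N) :
    Rdyn N hb z q (a,b) (c,d) =
      if a = c ∧ b = d then (if a = b then 1/z + 1/hb else 1/hb + (N:ℂ)/(q a - q b))
      else if a = d ∧ b = c then 1/z + (N:ℂ)/(q b - q a) else 0 := by
  simp only [Rdyn, Matrix.add_apply, Matrix.smul_apply, Matrix.sum_apply, Eu,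
    Matrix.kroneckerMap_apply, Matrix.single, Matrix.of_apply, smul_eq_mul,
    mul_ite, mul_one, mul_zero, ite_mul, zero_mul, one_mul]
  simp only [show ∀ (f : Fin N → ℂ) (i : Fin N),
      ∑ j ∈ Finset.univ.erase i, f j = (∑ j, f j) - f i from
    fun f i => Finset.sum_erase_eq_sub (Finset.mem_univ i)]
  simp only [ite_and, Finset.sum_ite_eq, Finset.sum_ite_eq', Finset.mem_univ, if_true,
    Finset.sum_sub_distrib]
  by_cases h1 : a = b <;> by_cases h2 : a = c <;> by_cases h3 : b = d <;>
    by_cases h4 : a = d <;> by_cases h5 : b = c <;>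
    simp_all [eq_comm]

lemma Pmat_apply (N : ℕ) (a b c d : Fin N) :
    Pmat N (a,b) (c,d) = if a = d ∧ b = c then 1 else 0 := by
  simp only [Pmat, Matrix.sum_apply, Eu, Matrix.kroneckerMap_apply, Matrix.single,
    Matrix.of_apply, mul_ite, mul_one, mul_zero, ite_mul, zero_mul, one_mul]
  simp only [ite_and, Finset.sum_ite_eq, Finset.sum_ite_eq', Finset.mem_univ, if_true]
  by_cases h1 : a = d <;> by_cases h2 : b = c <;> simp_all [eq_comm]

lemma PMP_apply (N : ℕ) (M : Matrix (Fin N × Fin N) (Fin N × Fin N) ℂ) (a b c d : Fin N) :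
    (Pmat N * M * Pmat N) ((a,b)) ((c,d)) = M (b,a) (d,c) := by
  simp only [Matrix.mul_apply, Fintype.sum_prod_type, Pmat_apply, ite_mul, mul_ite,
    one_mul, mul_one, zero_mul, mul_zero, ite_and]
  simp [Finset.sum_ite_eq, Finset.sum_ite_eq']

lemma key (N : ℕ) (x y : ℂ) : (N:ℂ)/(x-y) = -((N:ℂ)/(y-x)) := by
  rw [← neg_sub y x, div_neg]

lemma Rdyn_skew (N : ℕ) (hb z : ℂ) (q : Fin N → ℂ) :
    Rdyn N hb z q = -(Pmat N * Rdyn N (-hb) (-z) q * Pmat N) := by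
  ext ⟨a,b⟩ ⟨c,d⟩
  rw [Matrix.neg_apply, PMP_apply, Rdyn_apply, Rdyn_apply]
  by_cases h1 : a = b <;> by_cases h2 : a = c <;> by_cases h3 : b = d <;>
    by_cases h4 : a = d <;> by_cases h5 : b = c <;>
    simp_all [eq_comm] <;> (try rw [key]) <;> ring

lemma Rdyn_apply' (N : ℕ) (hb z : ℂ) (q : Fin N → ℂ) (a b e f : Fin N) :
    Rdyn N hb z q (a,b) (e,f) =
      (if a = e ∧ b = f then (if a = b then 1/z else 1/hb + (N:ℂ)/(q a - q b)) else 0)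
      + (if a = f ∧ b = e then (if a = b then 1/hb else 1/z + (N:ℂ)/(q b - q a)) else 0) := by
  rw [Rdyn_apply]
  by_cases h1 : a = b <;> by_cases h2 : a = e <;> by_cases h3 : b = f <;>
    by_cases h4 : a = f <;> by_cases h5 : b = e <;> simp_all [eq_comm] <;> ring

lemma Rdyn_unitarity (N : ℕ) (hb z : ℂ) (q : Fin N → ℂ) :
    Rdyn N hb z q * (Pmat N * Rdyn N hb (-z) q * Pmat N) =
      (1 / hb ^ 2 - 1 / z ^ 2) •
        ((1 : Matrix (Fin N) (Fin N) ℂ) ⊗ₖ (1 : Matrix (Fin N) (Fin N) ℂ)) := by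
  ext ⟨a,b⟩ ⟨c,d⟩
  rw [Matrix.mul_apply]
  by_cases h1 : a = b
  · subst h1
    rw [Finset.sum_eq_single (a,a)]
    · rw [Rdyn_apply', PMP_apply, Rdyn_apply']
      simp only [Matrix.smul_apply, Matrix.kroneckerMap_apply, Matrix.one_apply, smul_eq_mul]
      by_cases h2 : a = c <;> by_cases h3 : a = d <;> simp_all [eq_comm] <;> ring
    · rintro ⟨e,f⟩ - hp
      rw [Rdyn_apply']
      have t1 : ¬(a = e ∧ a = f) := by
        rintro ⟨rfl, rfl⟩; exact hp rfl
      have t2 : ¬(a = f ∧ a = e) := fun h => t1 ⟨h.2, h.1⟩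
      simp [t1, t2]
    · intro h; exact absurd (Finset.mem_univ _) h
  · rw [Finset.sum_eq_add_of_mem (a,b) (b,a) (Finset.mem_univ _) (Finset.mem_univ _)
      (by simp [Prod.ext_iff, h1])
      (by
        rintro ⟨e,f⟩ - ⟨hp1, hp2⟩
        rw [Rdyn_apply']
        have t1 : ¬(a = e ∧ b = f) := by rintro ⟨rfl, rfl⟩; exact hp1 rfl
        have t2 : ¬(a = f ∧ b = e) := by rintro ⟨rfl, rfl⟩; exact hp2 rfl
        simp [t1, t2])]
    rw [Rdyn_apply', Rdyn_apply', PMP_apply, PMP_apply, Rdyn_apply', Rdyn_apply']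
    simp only [Matrix.smul_apply, Matrix.kroneckerMap_apply, Matrix.one_apply, smul_eq_mul]
    by_cases h2 : a = c <;> by_cases h3 : b = d <;> by_cases h4 : a = d <;>
      by_cases h5 : b = c <;> simp_all [eq_comm] <;> rw [key] <;> ring

/-- Skew-symmetry and unitarity of the dynamical rational GL_N R-matrix:
`R^{dyn}(ℏ,z|q) = −P₁₂·R^{dyn}(−ℏ,−z|q)·P₁₂` and
`R^{dyn}(ℏ,z|q)·(P₁₂·R^{dyn}(ℏ,−z|q)·P₁₂) = (1/ℏ² − 1/z²)·(1_N ⊗ 1_N)`. -/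
theorem Rdyn_skew_unitarity (N : ℕ) (hN : 2 ≤ N) (hb z : ℂ) (hhb : hb ≠ 0) (hz : z ≠ 0)
    (q : Fin N → ℂ) (hq : Function.Injective q) :
    Rdyn N hb z q = -(Pmat N * Rdyn N (-hb) (-z) q * Pmat N) ∧
    Rdyn N hb z q * (Pmat N * Rdyn N hb (-z) q * Pmat N) =
      (1 / hb ^ 2 - 1 / z ^ 2) •
        ((1 : Matrix (Fin N) (Fin N) ℂ) ⊗ₖ (1 : Matrix (Fin N) (Fin N) ℂ)) := by
  exact ⟨Rdyn_skew N hb z q, Rdyn_unitarity N hb z q⟩
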